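/- Let P be an n×n row-stochastic matrix that is irreducible and aperiodic with stationary distribution π, let ε > 0, and let t be an integer with t ≥ t_mix(P, ε). Then for every row vector v ∈ ℝⁿ with ‖v‖₂ = 1 and ⟨v, π⟩ = 0 (Euclidean inner product), one has ‖v(I − P^t)‖₂ ≥ 1 − 2√n·ε. -/

import Mathlib

open Matrix BigOperators

/-- A row-stochastic matrix: nonnegative entries, each row sums to 1. -/
def IsStochastic {n : ℕ} (P : Matrix (Fin n) (Fin n) ℝ) : Prop :=
  (∀ i j, 0 ≤ P i j) ∧ ∀ i, ∑ j, P i j = 1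

/-- Irreducibility: every state can reach every other state. -/
def MCIrreducible {n : ℕ} (P : Matrix (Fin n) (Fin n) ℝ) : Prop :=
  ∀ i j, ∃ m : ℕ, 0 < (P ^ m) i j

/-- Aperiodicity (for a finite chain): every state has eventually positive return
probabilities. -/
def MCAperiodic {n : ℕ} (P : Matrix (Fin n) (Fin n) ℝ) : Prop :=
  ∀ i : Fin n, ∃ N : ℕ, ∀ m : ℕ, N ≤ m → 0 < (P ^ m) i i

/-- A probability (row) vector. -/
def IsProbVec {n : ℕ} (v : Fin n → ℝ) : Prop :=
  (∀ i, 0 ≤ v i) ∧ ∑ i, v i = 1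

/-- Total variation distance between two vectors. -/
noncomputable def tvDist {n : ℕ} (μ ν : Fin n → ℝ) : ℝ :=
  (1 / 2) * ∑ i, |μ i - ν i|

/-- Euclidean norm on ℝⁿ. -/
noncomputable def euclNorm {n : ℕ} (v : Fin n → ℝ) : ℝ :=
  Real.sqrt (∑ i, (v i) ^ 2)

/-- Mixing time of `P` with stationary distribution `π`. -/
noncomputable def mixingTime {n : ℕ} (P : Matrix (Fin n) (Fin n) ℝ)
    (π : Fin n → ℝ) (ε : ℝ) : ℕ :=
  sInf {T : ℕ | ∀ ν : Fin n → ℝ, IsProbVec ν → tvDist (ν ᵥ* (P ^ T)) π ≤ ε}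

/-- The interpolation `P_t = (1-t)·P₀ + t·P₁`. -/
noncomputable def Pt {n : ℕ} (P₀ P₁ : Matrix (Fin n) (Fin n) ℝ) (t : ℝ) :
    Matrix (Fin n) (Fin n) ℝ :=
  (1 - t) • P₀ + t • P₁

/-- The ordered product `P_{(j+1)/T} P_{(j+2)/T} ⋯ P_{k/T}` (identity if `j ≥ k`). -/
noncomputable def prodSeg {n : ℕ} (P₀ P₁ : Matrix (Fin n) (Fin n) ℝ) (T j k : ℕ) :
    Matrix (Fin n) (Fin n) ℝ :=
  ((List.range (k - j)).map (fun i => Pt P₀ P₁ (((j : ℝ) + (i : ℝ) + 1) / (T : ℝ)))).prod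

/-- The ordered product `P_{1/T} P_{2/T} ⋯ P_{k/T}`. -/
noncomputable def adiabProd {n : ℕ} (P₀ P₁ : Matrix (Fin n) (Fin n) ℝ) (T k : ℕ) :
    Matrix (Fin n) (Fin n) ℝ :=
  prodSeg P₀ P₁ T 0 k

/-- Adiabatic time of the adiabatic evolution between `P₀` and `P₁`,
with `π₁` the stationary distribution of `P₁`. -/
noncomputable def adiabaticTime {n : ℕ} (P₀ P₁ : Matrix (Fin n) (Fin n) ℝ)
    (π₁ : Fin n → ℝ) (ε : ℝ) : ℕ :=
  sInf {T' : ℕ | ∀ T : ℕ, T' ≤ T → ∀ ν : Fin n → ℝ, IsProbVec ν →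
    tvDist ((ν ᵥ* P₀) ᵥ* adiabProd P₀ P₁ T T) π₁ ≤ ε}

/-- Stable adiabatic time, where `π s` is the stationary distribution of `P_s`. -/
noncomputable def stableAdiabaticTime {n : ℕ} (P₀ P₁ : Matrix (Fin n) (Fin n) ℝ)
    (π : ℝ → Fin n → ℝ) (ε : ℝ) : ℕ :=
  sInf {T : ℕ | ∀ k : ℕ, 1 ≤ k → k ≤ T →
    tvDist ((π 0) ᵥ* adiabProd P₀ P₁ T k) (π ((k : ℝ) / (T : ℝ))) < ε}

/-- `t_mix(ε) = sup_{s ∈ [0,1]} t_mix(P_s, ε)`, where `π s` is the stationary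
distribution of `P_s`. -/
noncomputable def maxMixingTime {n : ℕ} (P₀ P₁ : Matrix (Fin n) (Fin n) ℝ)
    (π : ℝ → Fin n → ℝ) (ε : ℝ) : ℕ :=
  sSup {m : ℕ | ∃ s ∈ Set.Icc (0 : ℝ) 1, m = mixingTime (Pt P₀ P₁ s) (π s) ε}

/-- `s` is a singular value of `A`: `s ≥ 0` and `s²` is an eigenvalue of `A Aᵀ`
(for a left eigenvector). -/
def IsSingularValue {n : ℕ} (A : Matrix (Fin n) (Fin n) ℝ) (s : ℝ) : Prop :=
  0 ≤ s ∧ ∃ v : Fin n → ℝ, v ≠ 0 ∧ v ᵥ* (A * Aᵀ) = (s ^ 2) • v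

/-- `σ` is the smallest nonzero (positive) singular value of `A`. -/
def IsSmallestPosSingularValue {n : ℕ} (A : Matrix (Fin n) (Fin n) ℝ) (σ : ℝ) : Prop :=
  0 < σ ∧ IsSingularValue A σ ∧ ∀ s : ℝ, 0 < s → IsSingularValue A s → σ ≤ s


section AuxStmt13

open Finset

private lemma vecMul_apply' {n : ℕ} (v : Fin n → ℝ) (M : Matrix (Fin n) (Fin n) ℝ) (j : Fin n) :
    (v ᵥ* M) j = ∑ i, v i * M i j := by
  rw [Matrix.vecMul, dotProduct]

private lemma stoch_pow {n : ℕ} {P : Matrix (Fin n) (Fin n) ℝ} (hP : IsStochastic P) (m : ℕ) :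
    IsStochastic (P ^ m) := by
  induction m with
  | zero =>
    refine ⟨fun i j => ?_, fun i => ?_⟩
    · rw [pow_zero, Matrix.one_apply]; positivity
    · simp [pow_zero, Matrix.one_apply]
  | succ m ih =>
    rw [pow_succ]
    refine ⟨fun i j => ?_, fun i => ?_⟩
    · rw [Matrix.mul_apply]
      exact Finset.sum_nonneg fun k _ => mul_nonneg (ih.1 i k) (hP.1 k j)
    · simp only [Matrix.mul_apply]
      rw [Finset.sum_comm]
      simp only [← Finset.mul_sum, hP.2, mul_one]
      exact ih.2 i

private lemma sum_vecMul_stoch {n : ℕ} {Q : Matrix (Fin n) (Fin n) ℝ} (hQ : IsStochastic Q)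
    (w : Fin n → ℝ) : ∑ j, (w ᵥ* Q) j = ∑ i, w i := by
  simp only [vecMul_apply']
  rw [Finset.sum_comm]
  simp only [← Finset.mul_sum, hQ.2, mul_one]

private lemma l1_contract {n : ℕ} {Q : Matrix (Fin n) (Fin n) ℝ} (hQ : IsStochastic Q)
    (w : Fin n → ℝ) : ∑ j, |(w ᵥ* Q) j| ≤ ∑ i, |w i| := by
  calc ∑ j, |(w ᵥ* Q) j| ≤ ∑ j, ∑ i, |w i| * Q i j := by
        refine Finset.sum_le_sum fun j _ => ?_
        rw [vecMul_apply']
        refine (Finset.abs_sum_le_sum_abs _ _).trans (le_of_eq ?_)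
        exact Finset.sum_congr rfl fun i _ => by rw [abs_mul, abs_of_nonneg (hQ.1 i j)]
    _ = ∑ i, |w i| := by
        rw [Finset.sum_comm]
        simp only [← Finset.mul_sum, hQ.2, mul_one]

private lemma doeblin_step {n : ℕ} {Q : Matrix (Fin n) (Fin n) ℝ} (hQ : IsStochastic Q)
    {π : Fin n → ℝ} (hπ1 : ∑ i, π i = 1) {δ : ℝ}
    (hlow : ∀ i j, δ * π j ≤ Q i j) {w : Fin n → ℝ} (hw : ∑ i, w i = 0) :
    ∑ j, |(w ᵥ* Q) j| ≤ (1 - δ) * ∑ i, |w i| := by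
  have key : ∀ j, (w ᵥ* Q) j = ∑ i, w i * (Q i j - δ * π j) := by
    intro j
    rw [vecMul_apply']
    simp only [mul_sub, Finset.sum_sub_distrib, ← Finset.sum_mul, hw, zero_mul, sub_zero]
  calc ∑ j, |(w ᵥ* Q) j| ≤ ∑ j, ∑ i, |w i| * (Q i j - δ * π j) := by
        refine Finset.sum_le_sum fun j _ => ?_
        rw [key j]
        refine (Finset.abs_sum_le_sum_abs _ _).trans (le_of_eq ?_)
        refine Finset.sum_congr rfl fun i _ => ?_
        rw [abs_mul, abs_of_nonneg (sub_nonneg.2 (hlow i j))]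
    _ = (1 - δ) * ∑ i, |w i| := by
        rw [Finset.sum_comm]
        have : ∀ i : Fin n, ∑ j, (Q i j - δ * π j) = 1 - δ := by
          intro i
          rw [Finset.sum_sub_distrib, hQ.2 i, ← Finset.mul_sum, hπ1, mul_one]
        simp only [← Finset.mul_sum, this]
        rw [Finset.mul_sum]
        exact (Finset.sum_congr rfl fun i _ => mul_comm _ _)

private lemma exists_pos_power {n : ℕ} (hn : 1 ≤ n) {P : Matrix (Fin n) (Fin n) ℝ}
    (hP : IsStochastic P) (hPi : MCIrreducible P) (hPa : MCAperiodic P) :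
    ∃ M : ℕ, ∀ i j, 0 < (P ^ M) i j := by
  choose N hN using hPa
  choose m hm using hPi
  have : Nonempty (Fin n) := ⟨⟨0, hn⟩⟩
  set M := Finset.univ.sup (fun p : Fin n × Fin n => N p.1 + m p.1 p.2) with hM
  refine ⟨M, fun i j => ?_⟩
  have hle : N i + m i j ≤ M :=
    Finset.le_sup (f := fun p : Fin n × Fin n => N p.1 + m p.1 p.2) (Finset.mem_univ (i, j))
  have hsplit : M = (M - m i j) + m i j := by omega
  have hNle : N i ≤ M - m i j := by omega
  have h1 : 0 < (P ^ (M - m i j)) i i := hN i _ hNle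
  have h2 : 0 < (P ^ (m i j)) i j := hm i j
  have hmain : (P ^ (M - m i j)) i i * (P ^ (m i j)) i j ≤ (P ^ M) i j := by
    conv_rhs => rw [hsplit, pow_add]
    rw [Matrix.mul_apply]
    exact Finset.single_le_sum (f := fun k => (P ^ (M - m i j)) i k * (P ^ (m i j)) k j)
      (fun k _ => mul_nonneg ((stoch_pow hP _).1 i k) ((stoch_pow hP _).1 k j))
      (Finset.mem_univ i)
  exact lt_of_lt_of_le (mul_pos h1 h2) hmain

private lemma stat_pow {n : ℕ} {P : Matrix (Fin n) (Fin n) ℝ} {π : Fin n → ℝ}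
    (hπstat : π ᵥ* P = π) (T : ℕ) : π ᵥ* (P ^ T) = π := by
  induction T with
  | zero => simp [pow_zero, Matrix.vecMul_one]
  | succ T ih => rw [pow_succ, ← Matrix.vecMul_vecMul, ih, hπstat]

private lemma mem_mixing_set {n : ℕ} (hn : 1 ≤ n) {P : Matrix (Fin n) (Fin n) ℝ}
    (hP : IsStochastic P) (hPi : MCIrreducible P) (hPa : MCAperiodic P)
    {π : Fin n → ℝ} (hπ : IsProbVec π) (hπstat : π ᵥ* P = π)
    {ε : ℝ} (hε : 0 < ε) {t : ℕ} (ht : mixingTime P π ε ≤ t) :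
    ∀ ν : Fin n → ℝ, IsProbVec ν → tvDist (ν ᵥ* (P ^ t)) π ≤ ε := by
  set S := {T : ℕ | ∀ ν : Fin n → ℝ, IsProbVec ν → tvDist (ν ᵥ* (P ^ T)) π ≤ ε} with hS
  have hkey : ∀ (ν : Fin n → ℝ) (T : ℕ), ν ᵥ* (P ^ T) - π = (ν - π) ᵥ* (P ^ T) := by
    intro ν T
    rw [Matrix.sub_vecMul, stat_pow hπstat]
  have hup : ∀ T ∈ S, ∀ T', T ≤ T' → T' ∈ S := by
    intro T hT T' hTT' ν hν
    have hdecomp : ν ᵥ* (P ^ T') - π = (ν ᵥ* (P ^ T) - π) ᵥ* (P ^ (T' - T)) := by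
      have hTT : T + (T' - T) = T' := by omega
      rw [hkey, hkey, Matrix.vecMul_vecMul, ← pow_add, hTT]
    have hc := l1_contract (stoch_pow hP (T' - T)) (ν ᵥ* (P ^ T) - π)
    have hT2 := hT ν hν
    simp only [tvDist] at hT2 ⊢
    have : ∑ i, |(ν ᵥ* (P ^ T') - π) i| ≤ ∑ i, |(ν ᵥ* (P ^ T) - π) i| := by
      rw [hdecomp]; exact hc
    simp only [Pi.sub_apply] at this hT2 ⊢
    nlinarith
  obtain ⟨M, hM⟩ := exists_pos_power hn hP hPi hPa
  have : Nonempty (Fin n) := ⟨⟨0, hn⟩⟩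
  have hne : (Finset.univ : Finset (Fin n × Fin n)).Nonempty := Finset.univ_nonempty
  set δ := Finset.univ.inf' hne (fun p : Fin n × Fin n => (P ^ M) p.1 p.2) with hδdef
  have hδpos : 0 < δ := by
    rw [hδdef, Finset.lt_inf'_iff]
    exact fun p _ => hM p.1 p.2
  have hlow : ∀ i j, δ * π j ≤ (P ^ M) i j := by
    intro i j
    calc δ * π j ≤ δ * 1 := by
          refine mul_le_mul_of_nonneg_left ?_ hδpos.le
          calc π j ≤ ∑ i, π i := Finset.single_le_sum (fun k _ => hπ.1 k) (Finset.mem_univ j)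
            _ = 1 := hπ.2
      _ = δ := mul_one δ
      _ ≤ (P ^ M) i j := Finset.inf'_le _ (Finset.mem_univ (i, j))
  have hδ1 : δ ≤ 1 := by
    obtain ⟨i⟩ := ‹Nonempty (Fin n)›
    calc δ ≤ (P ^ M) i i := Finset.inf'_le _ (Finset.mem_univ (i, i))
      _ ≤ ∑ j, (P ^ M) i j :=
        Finset.single_le_sum (fun l _ => (stoch_pow hP M).1 i l) (Finset.mem_univ i)
      _ = 1 := (stoch_pow hP M).2 i
  have hiter : ∀ (k : ℕ) (w : Fin n → ℝ), ∑ i, w i = 0 →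
      ∑ j, |(w ᵥ* (P ^ (M * k))) j| ≤ (1 - δ) ^ k * ∑ i, |w i| := by
    intro k
    induction k with
    | zero => intro w hw; simp [Matrix.vecMul_one]
    | succ k ih =>
      intro w hw
      have hMk : P ^ (M * (k + 1)) = P ^ (M * k) * P ^ M := by rw [← pow_add]; ring_nf
      rw [hMk, ← Matrix.vecMul_vecMul]
      have hw2 : ∑ i, (w ᵥ* (P ^ (M * k))) i = 0 := by
        rw [sum_vecMul_stoch (stoch_pow hP _), hw]
      calc ∑ j, |((w ᵥ* (P ^ (M * k))) ᵥ* (P ^ M)) j|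
          ≤ (1 - δ) * ∑ i, |(w ᵥ* (P ^ (M * k))) i| :=
            doeblin_step (stoch_pow hP M) hπ.2 hlow hw2
        _ ≤ (1 - δ) * ((1 - δ) ^ k * ∑ i, |w i|) :=
            mul_le_mul_of_nonneg_left (ih w hw) (by linarith)
        _ = (1 - δ) ^ (k + 1) * ∑ i, |w i| := by ring
  obtain ⟨k, hk⟩ := exists_pow_lt_of_lt_one hε (show (1:ℝ) - δ < 1 by linarith)
  have hT0 : M * k ∈ S := by
    intro ν hν
    have hw0 : ∑ i, (ν - π) i = 0 := by
      simp only [Pi.sub_apply, Finset.sum_sub_distrib, hν.2, hπ.2, sub_self]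
    have h1 : ∑ i, |(ν - π) i| ≤ 2 := by
      calc ∑ i, |(ν - π) i| ≤ ∑ i, (ν i + π i) := by
            refine Finset.sum_le_sum fun i _ => ?_
            rw [Pi.sub_apply, abs_sub_le_iff]
            constructor <;> nlinarith [hν.1 i, hπ.1 i]
        _ = 2 := by rw [Finset.sum_add_distrib, hν.2, hπ.2]; norm_num
    have hit := hiter k (ν - π) hw0
    simp only [tvDist]
    have h2 : ∑ i, |(ν ᵥ* (P ^ (M * k))) i - π i| = ∑ j, |((ν - π) ᵥ* (P ^ (M * k))) j| := by
      rw [← hkey]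
      simp [Pi.sub_apply]
    rw [h2]
    have hpow : (0:ℝ) ≤ (1 - δ) ^ k := pow_nonneg (by linarith) k
    nlinarith
  have hmem : mixingTime P π ε ∈ S := Nat.sInf_mem ⟨M * k, hT0⟩
  exact hup _ hmem t ht

private lemma euclNorm_eq_norm {n : ℕ} (v : Fin n → ℝ) :
    euclNorm v = ‖(WithLp.equiv 2 (Fin n → ℝ)).symm v‖ := by
  rw [EuclideanSpace.norm_eq, euclNorm]
  congr 1
  refine Finset.sum_congr rfl fun i _ => ?_
  show v i ^ 2 = ‖v i‖ ^ 2
  rw [Real.norm_eq_abs, sq_abs]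

private lemma euclNorm_nonneg {n : ℕ} (v : Fin n → ℝ) : 0 ≤ euclNorm v := Real.sqrt_nonneg _

private lemma euclNorm_sub_ge {n : ℕ} (x y : Fin n → ℝ) :
    euclNorm x - euclNorm y ≤ euclNorm (x - y) := by
  rw [euclNorm_eq_norm, euclNorm_eq_norm, euclNorm_eq_norm]
  have h : (WithLp.equiv 2 (Fin n → ℝ)).symm (x - y)
      = (WithLp.equiv 2 (Fin n → ℝ)).symm x - (WithLp.equiv 2 (Fin n → ℝ)).symm y := by
    simp
  rw [h]
  exact norm_sub_norm_le _ _

private lemma l2_le_l1 {n : ℕ} (x : Fin n → ℝ) : euclNorm x ≤ ∑ i, |x i| := by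
  rw [euclNorm]
  have h : ∑ i, (x i) ^ 2 ≤ (∑ i, |x i|) ^ 2 := by
    calc ∑ i, (x i) ^ 2 ≤ ∑ i, |x i| * ∑ j, |x j| := by
          refine Finset.sum_le_sum fun i _ => ?_
          rw [← sq_abs, sq]
          refine mul_le_mul_of_nonneg_left ?_ (abs_nonneg _)
          exact Finset.single_le_sum (fun j _ => abs_nonneg (x j)) (Finset.mem_univ i)
      _ = (∑ i, |x i|) ^ 2 := by rw [← Finset.sum_mul, sq]
  calc Real.sqrt (∑ i, (x i)^2) ≤ Real.sqrt ((∑ i, |x i|)^2) := Real.sqrt_le_sqrt h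
    _ = ∑ i, |x i| := Real.sqrt_sq (Finset.sum_nonneg fun i _ => abs_nonneg _)

private lemma l1_le_sqrtn_l2 {n : ℕ} (x : Fin n → ℝ) :
    ∑ i, |x i| ≤ Real.sqrt n * euclNorm x := by
  have h := Finset.sum_mul_sq_le_sq_mul_sq Finset.univ (fun _ : Fin n => (1:ℝ)) (fun i => |x i|)
  simp only [one_mul, one_pow, Finset.sum_const, Finset.card_univ, Fintype.card_fin,
    nsmul_eq_mul, mul_one, sq_abs] at h
  have h1 : ∑ i, |x i| = Real.sqrt ((∑ i, |x i|) ^ 2) :=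
    (Real.sqrt_sq (Finset.sum_nonneg fun i _ => abs_nonneg _)).symm
  rw [h1, euclNorm, ← Real.sqrt_mul (by positivity)]
  exact Real.sqrt_le_sqrt h

end AuxStmt13

/-- For an irreducible aperiodic stochastic P with stationary π, ε > 0
and any integer t ≥ t_mix(P, ε): every row vector v with ‖v‖₂ = 1 and ⟨v, π⟩ = 0
satisfies `‖v(I − Pᵗ)‖₂ ≥ 1 − 2√n·ε`. -/
theorem stmt_13 {n : ℕ} (hn : 1 ≤ n) (P : Matrix (Fin n) (Fin n) ℝ)
    (hP : IsStochastic P) (hPi : MCIrreducible P) (hPa : MCAperiodic P)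
    (π : Fin n → ℝ) (hπ : IsProbVec π) (hπstat : π ᵥ* P = π)
    (ε : ℝ) (hε : 0 < ε) (t : ℕ) (ht : mixingTime P π ε ≤ t)
    (v : Fin n → ℝ) (hvnorm : euclNorm v = 1) (hvπ : ∑ i, v i * π i = 0) :
    1 - 2 * Real.sqrt n * ε ≤ euclNorm (v ᵥ* ((1 : Matrix (Fin n) (Fin n) ℝ) - P ^ t)) := by
  have hmix := mem_mixing_set hn hP hPi hPa hπ hπstat hε ht
  rcases le_or_gt (1 - 2 * Real.sqrt n * ε) 0 with hneg | hpos
  · exact hneg.trans (euclNorm_nonneg _)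
  set s := ∑ i, v i with hs
  set w := v - s • π with hwdef
  have hsum1 : ∑ i, v i ^ 2 = 1 := by
    have h0 : (0:ℝ) ≤ ∑ i, v i ^ 2 := Finset.sum_nonneg fun i _ => sq_nonneg _
    have h2 := Real.sq_sqrt h0
    rw [show Real.sqrt (∑ i, v i ^ 2) = euclNorm v from rfl, hvnorm] at h2
    linarith
  have hw_sum : ∑ i, w i = 0 := by
    simp only [hwdef, Pi.sub_apply, Pi.smul_apply, smul_eq_mul, Finset.sum_sub_distrib,
      ← Finset.mul_sum, hπ.2, mul_one, ← hs, sub_self]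
  have hvw : ∑ i, v i * w i = 1 := by
    have hsπ : ∑ i, v i * (s * π i) = s * ∑ i, v i * π i := by
      rw [Finset.mul_sum]
      exact Finset.sum_congr rfl fun i _ => by ring
    simp only [hwdef, Pi.sub_apply, Pi.smul_apply, smul_eq_mul, mul_sub,
      Finset.sum_sub_distrib, hsπ, hvπ, mul_zero, sub_zero, ← sq, hsum1]
  have hwnorm : 1 ≤ euclNorm w := by
    have hcs := Finset.sum_mul_sq_le_sq_mul_sq Finset.univ v w
    rw [hvw, hsum1, one_pow, one_mul] at hcs
    rw [euclNorm]
    calc (1:ℝ) = Real.sqrt 1 := (Real.sqrt_one).symm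
      _ ≤ Real.sqrt (∑ i, w i ^ 2) := Real.sqrt_le_sqrt hcs
  have hident : v ᵥ* ((1 : Matrix (Fin n) (Fin n) ℝ) - P ^ t) = w - w ᵥ* (P ^ t) := by
    have hv : v = w + s • π := by rw [hwdef]; abel
    rw [Matrix.vecMul_sub, Matrix.vecMul_one]
    conv_lhs => rw [hv, Matrix.add_vecMul, Matrix.smul_vecMul, stat_pow hπstat]
    abel
  rw [hident]
  -- decomposition into probability vectors
  set a : Fin n → ℝ := fun i => max (w i) 0 with hadef
  set b : Fin n → ℝ := fun i => max (-w i) 0 with hbdef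
  have hab_sub : w = a - b := by
    funext i
    simp only [hadef, hbdef, Pi.sub_apply]
    rcases le_total 0 (w i) with h | h
    · rw [max_eq_left h, max_eq_right (by linarith), sub_zero]
    · rw [max_eq_right h, max_eq_left (by linarith)]
      ring
  have hab_abs : ∀ i, a i + b i = |w i| := by
    intro i
    simp only [hadef, hbdef]
    rcases le_total 0 (w i) with h | h
    · rw [max_eq_left h, max_eq_right (by linarith), abs_of_nonneg h, add_zero]
    · rw [max_eq_right h, max_eq_left (by linarith), abs_of_nonpos h, zero_add]
  set c := ∑ i, a i with hcdef
  have hbsum : ∑ i, b i = c := by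
    have h := hw_sum
    rw [hab_sub] at h
    simp only [Pi.sub_apply, Finset.sum_sub_distrib] at h
    rw [← hcdef] at h
    linarith
  have h2c : 2 * c = ∑ i, |w i| := by
    have : ∑ i, (a i + b i) = ∑ i, |w i| := Finset.sum_congr rfl fun i _ => hab_abs i
    rw [Finset.sum_add_distrib, ← hcdef, hbsum] at this
    linarith
  have hl1w : 1 ≤ ∑ i, |w i| := hwnorm.trans (l2_le_l1 w)
  have hcpos : 0 < c := by linarith
  have hμa : IsProbVec (c⁻¹ • a) := by
    constructor
    · intro i
      exact mul_nonneg (inv_nonneg.2 hcpos.le) (le_max_right _ _)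
    · simp only [Pi.smul_apply, smul_eq_mul, ← Finset.mul_sum, ← hcdef]
      field_simp
  have hμb : IsProbVec (c⁻¹ • b) := by
    constructor
    · intro i
      exact mul_nonneg (inv_nonneg.2 hcpos.le) (le_max_right _ _)
    · simp only [Pi.smul_apply, smul_eq_mul, ← Finset.mul_sum, hbsum]
      field_simp
  -- bound on ℓ¹ norm of w P^t
  have hbound : ∑ j, |(w ᵥ* (P ^ t)) j| ≤ 2 * ε * ∑ i, |w i| := by
    have hwQ : ∀ j, (w ᵥ* (P ^ t)) j
        = c * (((c⁻¹ • a) ᵥ* (P ^ t)) j - π j) - c * (((c⁻¹ • b) ᵥ* (P ^ t)) j - π j) := by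
      intro j
      have ha' : ((c⁻¹ • a) ᵥ* (P ^ t)) = c⁻¹ • (a ᵥ* (P ^ t)) := Matrix.smul_vecMul _ _ _
      have hb' : ((c⁻¹ • b) ᵥ* (P ^ t)) = c⁻¹ • (b ᵥ* (P ^ t)) := Matrix.smul_vecMul _ _ _
      rw [hab_sub, Matrix.sub_vecMul, ha', hb']
      simp only [Pi.sub_apply, Pi.smul_apply, smul_eq_mul]
      field_simp
      ring
    have hta := hmix (c⁻¹ • a) hμa
    have htb := hmix (c⁻¹ • b) hμb
    simp only [tvDist] at hta htb
    calc ∑ j, |(w ᵥ* (P ^ t)) j|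
        ≤ ∑ j, (c * |((c⁻¹ • a) ᵥ* (P ^ t)) j - π j| + c * |((c⁻¹ • b) ᵥ* (P ^ t)) j - π j|) := by
          refine Finset.sum_le_sum fun j _ => ?_
          rw [hwQ j]
          calc |c * (((c⁻¹ • a) ᵥ* (P ^ t)) j - π j) - c * (((c⁻¹ • b) ᵥ* (P ^ t)) j - π j)|
              ≤ |c * (((c⁻¹ • a) ᵥ* (P ^ t)) j - π j)| + |c * (((c⁻¹ • b) ᵥ* (P ^ t)) j - π j)| :=
                abs_sub _ _
            _ = c * |((c⁻¹ • a) ᵥ* (P ^ t)) j - π j| + c * |((c⁻¹ • b) ᵥ* (P ^ t)) j - π j| := by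
                rw [abs_mul, abs_mul, abs_of_pos hcpos]
      _ = c * (∑ j, |((c⁻¹ • a) ᵥ* (P ^ t)) j - π j|)
          + c * (∑ j, |((c⁻¹ • b) ᵥ* (P ^ t)) j - π j|) := by
          rw [Finset.sum_add_distrib, Finset.mul_sum, Finset.mul_sum]
      _ ≤ c * (2 * ε) + c * (2 * ε) := by
          have h1 : ∑ j, |((c⁻¹ • a) ᵥ* (P ^ t)) j - π j| ≤ 2 * ε := by linarith
          have h2 : ∑ j, |((c⁻¹ • b) ᵥ* (P ^ t)) j - π j| ≤ 2 * ε := by linarith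
          have := mul_le_mul_of_nonneg_left h1 hcpos.le
          have := mul_le_mul_of_nonneg_left h2 hcpos.le
          linarith
      _ = 2 * ε * ∑ i, |w i| := by rw [← h2c]; ring
  -- conclude
  have hA := euclNorm_sub_ge w (w ᵥ* (P ^ t))
  have hB : euclNorm (w ᵥ* (P ^ t)) ≤ 2 * ε * (Real.sqrt n * euclNorm w) := by
    calc euclNorm (w ᵥ* (P ^ t)) ≤ ∑ j, |(w ᵥ* (P ^ t)) j| := l2_le_l1 _
      _ ≤ 2 * ε * ∑ i, |w i| := hbound
      _ ≤ 2 * ε * (Real.sqrt n * euclNorm w) :=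
          mul_le_mul_of_nonneg_left (l1_le_sqrtn_l2 w) (by linarith)
  nlinarith [euclNorm_nonneg (w - w ᵥ* (P ^ t)), euclNorm_nonneg (w ᵥ* (P ^ t))]
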